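/- If G is a group and H is a normal subgroup of G such that the quotient G/H is cyclic, then the derived subgroup G' equals the commutator subgroup [G,H]. -/

import Mathlib

open scoped commutatorElement

theorem derived_eq_commutator_of_cyclic_quotient
    {G : Type*} [Group G] (H : Subgroup G) [H.Normal]
    (hcyc : IsCyclic (G ⧸ H)) :
    commutator G = ⁅(⊤ : Subgroup G), H⁆ := by
  set N : Subgroup G := ⁅(⊤ : Subgroup G), H⁆ with hN
  have hNnormal : N.Normal := Subgroup.commutator_normal _ _
  have hNH : N ≤ H := Subgroup.commutator_le_right _ _
  refine le_antisymm ?_ (Subgroup.commutator_mono le_rfl le_top)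
  -- the induced map G/N → G/H
  let f : G ⧸ N →* G ⧸ H := QuotientGroup.map N H (MonoidHom.id G) hNH
  have hker : f.ker ≤ Subgroup.center (G ⧸ N) := by
    intro x hx
    induction x using QuotientGroup.induction_on with
    | H g =>
      have hg : g ∈ H := by
        have : f (QuotientGroup.mk g) = 1 := hx
        exact (QuotientGroup.eq_one_iff g).mp this
      rw [Subgroup.mem_center_iff]
      intro y
      induction y using QuotientGroup.induction_on with
      | H a =>
        rw [← QuotientGroup.mk_mul, ← QuotientGroup.mk_mul, QuotientGroup.eq]
        have : ⁅a, g⁆ ∈ N := Subgroup.commutator_mem_commutator (Subgroup.mem_top a) hg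
        have h' : ⁅a⁻¹, g⁻¹⁆ ∈ N :=
          Subgroup.commutator_mem_commutator (Subgroup.mem_top a⁻¹) (inv_mem hg)
        have h'' : (⁅a⁻¹, g⁻¹⁆)⁻¹ ∈ N := inv_mem h'
        convert h'' using 1
        group
  have hcomm : ∀ a b : G ⧸ N, a * b = b * a :=
    commutative_of_cyclic_center_quotient f hker
  rw [commutator, Subgroup.commutator_le]
  intro g _ h _
  refine (QuotientGroup.eq_one_iff _).mp ?_
  have : (QuotientGroup.mk ⁅g, h⁆ : G ⧸ N) = ⁅(QuotientGroup.mk g : G ⧸ N), QuotientGroup.mk h⁆ := by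
    simp [commutatorElement_def]
  rw [this]
  exact commutatorElement_eq_one_iff_commute.mpr (hcomm _ _)
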